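/- Δ ⊆ ASS is a diagnosis for (SD, ASS, OBS) if and only if Δ is a minimal hitting set for the collection of minimal conflict sets for (SD, ASS, OBS). -/

import Mathlib

inductive PropForm (V : Type) : Type
  | var : V → PropForm V
  | fls : PropForm V
  | neg : PropForm V → PropForm V
  | conj : PropForm V → PropForm V → PropForm V
  | disj : PropForm V → PropForm V → PropForm V
  | impl : PropForm V → PropForm V → PropForm V

namespace PropForm
def eval {V : Type} (v : V → Prop) : PropForm V → Prop
  | var x => v x
  | fls => False
  | neg φ => ¬ eval v φ
  | conj φ ψ => eval v φ ∧ eval v ψ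
  | disj φ ψ => eval v φ ∨ eval v ψ
  | impl φ ψ => eval v φ → eval v ψ
end PropForm

/-- `α ∈ Cn(X)`: classical propositional consequence. -/
def Entails {V : Type} (X : Set (PropForm V)) (α : PropForm V) : Prop :=
  ∀ v : V → Prop, (∀ φ ∈ X, φ.eval v) → α.eval v

def Consistent {V : Type} (X : Set (PropForm V)) : Prop :=
  ∃ v : V → Prop, ∀ φ ∈ X, φ.eval v

/-- `B ⊥⊥ α`: the set of α-kernels (minimal subsets of B entailing α). -/
def Kernel {V : Type} (B : Set (PropForm V)) (α : PropForm V) :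
    Set (Set (PropForm V)) :=
  {X | X ⊆ B ∧ Entails X α ∧ ∀ Y, Y ⊂ X → ¬ Entails Y α}

/-- The set of variables `A`, viewed as formulas. -/
def vars {V : Type} (A : Set V) : Set (PropForm V) := PropForm.var '' A

/-- Simplified (Reiter) diagnosis: minimal Δ ⊆ ASS with SD ∪ {OBS} ∪ (ASS \ Δ) consistent. -/
def Diagnosis {V : Type} (SD : Set (PropForm V)) (ASS : Set V) (OBS : PropForm V)
    (Δ : Set V) : Prop :=
  Δ ⊆ ASS ∧ Consistent (SD ∪ {OBS} ∪ vars (ASS \ Δ)) ∧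
    ∀ Δ', Δ' ⊂ Δ → ¬ Consistent (SD ∪ {OBS} ∪ vars (ASS \ Δ'))

/-- Original diagnosis: minimal Δ ⊆ ASS with
    SD ∪ {OBS} ∪ (ASS \ Δ) ∪ {¬p | p ∈ Δ} consistent. -/
def FullDiagnosis {V : Type} (SD : Set (PropForm V)) (ASS : Set V) (OBS : PropForm V)
    (Δ : Set V) : Prop :=
  Δ ⊆ ASS ∧
  Consistent (SD ∪ {OBS} ∪ vars (ASS \ Δ) ∪ ((fun p => (PropForm.var p).neg) '' Δ)) ∧
    ∀ Δ', Δ' ⊂ Δ →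
      ¬ Consistent (SD ∪ {OBS} ∪ vars (ASS \ Δ') ∪ ((fun p => (PropForm.var p).neg) '' Δ'))

def ConflictSet {V : Type} (SD : Set (PropForm V)) (ASS : Set V) (OBS : PropForm V)
    (Conf : Set V) : Prop :=
  Conf ⊆ ASS ∧ ¬ Consistent (SD ∪ {OBS} ∪ vars Conf)

def MinConflictSet {V : Type} (SD : Set (PropForm V)) (ASS : Set V) (OBS : PropForm V)
    (Conf : Set V) : Prop :=
  ConflictSet SD ASS OBS Conf ∧ ∀ Y, Y ⊂ Conf → ¬ ConflictSet SD ASS OBS Y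

def HittingSet {α : Type*} (C : Set (Set α)) (H : Set α) : Prop :=
  H ⊆ ⋃₀ C ∧ ∀ S ∈ C, (H ∩ S).Nonempty

def MinimalHittingSet {α : Type*} (C : Set (Set α)) (H : Set α) : Prop :=
  HittingSet C H ∧ ∀ H', H' ⊂ H → ¬ HittingSet C H'

lemma consistent_mono {V : Type} {X Y : Set (PropForm V)} (h : X ⊆ Y)
    (hY : Consistent Y) : Consistent X := by
  obtain ⟨v, hv⟩ := hY
  exact ⟨v, fun φ hφ => hv φ (h hφ)⟩

lemma vars_mono {V : Type} {A B : Set V} (h : A ⊆ B) : vars A ⊆ vars B :=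
  Set.image_mono h

lemma exists_min_conflict_aux {V : Type} (SD : Set (PropForm V)) (ASS : Set V)
    (OBS : PropForm V) :
    ∀ n (C : Set V), C.ncard = n → C.Finite → ConflictSet SD ASS OBS C →
      ∃ M, M ⊆ C ∧ MinConflictSet SD ASS OBS M := by
  intro n
  induction n using Nat.strong_induction_on with
  | _ n ih =>
    intro C hcard hfin hC
    by_cases h : ∀ Y, Y ⊂ C → ¬ ConflictSet SD ASS OBS Y
    · exact ⟨C, subset_rfl, hC, h⟩
    · push_neg at h
      obtain ⟨Y, hYC, hY⟩ := h
      obtain ⟨M, hMY, hM⟩ := ih Y.ncard (hcard ▸ Set.ncard_lt_ncard hYC hfin) Y rfl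
        (hfin.subset hYC.subset) hY
      exact ⟨M, hMY.trans hYC.subset, hM⟩

lemma exists_min_conflict {V : Type} {SD : Set (PropForm V)} {ASS : Set V}
    {OBS : PropForm V} {C : Set V} (hfin : C.Finite) (hC : ConflictSet SD ASS OBS C) :
    ∃ M, M ⊆ C ∧ MinConflictSet SD ASS OBS M :=
  exists_min_conflict_aux SD ASS OBS C.ncard C rfl hfin hC

/-- Key bridge: consistency of SD ∪ {OBS} ∪ (ASS \ Δ) iff Δ hits every minimal
conflict set. -/
lemma consistent_iff_hits {V : Type} {SD : Set (PropForm V)} {ASS : Set V}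
    {OBS : PropForm V} (hASS : ASS.Finite) (Δ : Set V) :
    Consistent (SD ∪ {OBS} ∪ vars (ASS \ Δ)) ↔
      ∀ C, MinConflictSet SD ASS OBS C → (Δ ∩ C).Nonempty := by
  constructor
  · intro hcons C hC
    by_contra hempty
    rw [Set.not_nonempty_iff_eq_empty] at hempty
    have hsub : C ⊆ ASS \ Δ := fun x hx =>
      ⟨hC.1.1 hx, fun hxΔ => by
        have : x ∈ Δ ∩ C := ⟨hxΔ, hx⟩
        simp [hempty] at this⟩
    exact hC.1.2 (consistent_mono
      (Set.union_subset_union_right _ (vars_mono hsub)) hcons)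
  · intro hhits
    by_contra hincons
    have hconf : ConflictSet SD ASS OBS (ASS \ Δ) := ⟨Set.diff_subset, hincons⟩
    obtain ⟨M, hMsub, hM⟩ := exists_min_conflict (hASS.subset Set.diff_subset) hconf
    obtain ⟨x, hxΔ, hxM⟩ := hhits M hM
    exact (hMsub hxM).2 hxΔ

/-- Reiter's theorem: Δ ⊆ ASS is a diagnosis iff Δ is a minimal hitting set
for the collection of minimal conflict sets. -/
theorem diagnosis_iff_minimal_hitting_set {V : Type} (SD : Set (PropForm V)) (ASS : Set V)
    (OBS : PropForm V) (hSD : SD.Finite) (hASS : ASS.Finite) (Δ : Set V) :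
    Diagnosis SD ASS OBS Δ ↔
      MinimalHittingSet {Y | MinConflictSet SD ASS OBS Y} Δ := by
  constructor
  · rintro ⟨hΔA, hcons, hmin⟩
    have hhits := (consistent_iff_hits hASS Δ).mp hcons
    refine ⟨⟨?_, fun S hS => hhits S hS⟩, ?_⟩
    · -- Δ ⊆ ⋃₀ minimal conflict sets
      intro x hx
      by_contra hxnot
      have hnot : ∀ C, MinConflictSet SD ASS OBS C → x ∉ C := by
        intro C hC hxC
        exact hxnot ⟨C, hC, hxC⟩
      have hhits' : ∀ C, MinConflictSet SD ASS OBS C → ((Δ \ {x}) ∩ C).Nonempty := by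
        intro C hC
        obtain ⟨y, hyΔ, hyC⟩ := hhits C hC
        exact ⟨y, ⟨hyΔ, fun hyx => hnot C hC (by rwa [Set.mem_singleton_iff.mp hyx] at hyC)⟩, hyC⟩
      have hcons' := (consistent_iff_hits hASS (Δ \ {x})).mpr hhits'
      exact hmin (Δ \ {x}) (Set.sdiff_singleton_ssubset.mpr hx) hcons'
    · intro H' hH' hHit
      exact hmin H' hH' ((consistent_iff_hits hASS H').mpr (fun C hC => hHit.2 C hC))
  · rintro ⟨⟨hsub, hhits⟩, hminH⟩
    have hΔA : Δ ⊆ ASS := by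
      intro x hx
      obtain ⟨C, hC, hxC⟩ := hsub hx
      exact hC.1.1 hxC
    refine ⟨hΔA, (consistent_iff_hits hASS Δ).mpr (fun C hC => hhits C hC), ?_⟩
    intro Δ' hΔ' hcons'
    have hhits' := (consistent_iff_hits hASS Δ').mp hcons'
    exact hminH Δ' hΔ' ⟨hΔ'.subset.trans hsub, fun S hS => hhits' S hS⟩
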